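/- For all integers k ≥ 2 and n ≥ m ≥ 1, the Ramsey number of k-uniform loose paths satisfies R(P^k_n, P^k_m) ≥ (k−1)n + ⌊(m+1)/2⌋; concretely, there is a red/blue coloring of all k-element subsets of a vertex set of size (k−1)n + ⌊(m+1)/2⌋ − 1 with no red copy of P^k_n and no blue copy of P^k_m (namely: partition the vertices into A of size (k−1)n and B of size ⌊(m+1)/2⌋ − 1, color blue every k-set meeting B and red all others). -/

import Mathlib

/-- The set of vertex *indices* of the `i`-th edge of a `k`-uniform loose path/cycle:
the indices `i*(k-1), …, i*(k-1) + (k-1)` (consecutive edges overlap in one index). -/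
def looseEdgeIdx (k i : ℕ) : Finset ℕ := Finset.Icc (i * (k - 1)) (i * (k - 1) + (k - 1))

/-- `v` is (the vertex map of) a copy of the `k`-uniform loose path of length `n`
(vertex indices `0, …, n*(k-1)`) all of whose edges receive color `c` under the
coloring `col` of the `k`-subsets of `V`. -/
def IsLoosePathCopy {V : Type} [DecidableEq V] (k : ℕ) (col : Finset V → Bool) (c : Bool)
    (n : ℕ) (v : ℕ → V) : Prop :=
  Set.InjOn v (Set.Iio (n * (k - 1) + 1)) ∧
    ∀ i < n, col ((looseEdgeIdx k i).image v) = c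

/-- The coloring `col` contains a copy of the `k`-uniform loose path of length `n`
in color `c`. -/
def HasLoosePath {V : Type} [DecidableEq V] (k : ℕ) (col : Finset V → Bool) (c : Bool)
    (n : ℕ) : Prop :=
  ∃ v : ℕ → V, IsLoosePathCopy k col c n v

/-- `v` is (the vertex map of) a copy of the `k`-uniform loose cycle of length `n`
(vertex indices `0, …, n*(k-1) - 1`, taken modulo `n*(k-1)`) all of whose edges
receive color `c` under the coloring `col`. -/
def IsLooseCycleCopy {V : Type} [DecidableEq V] (k : ℕ) (col : Finset V → Bool) (c : Bool)
    (n : ℕ) (v : ℕ → V) : Prop :=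
  Set.InjOn v (Set.Iio (n * (k - 1))) ∧
    ∀ i < n, col ((looseEdgeIdx k i).image (fun j => v (j % (n * (k - 1))))) = c

/-- The coloring `col` contains a copy of the `k`-uniform loose cycle of length `n`
in color `c`. -/
def HasLooseCycle {V : Type} [DecidableEq V] (k : ℕ) (col : Finset V → Bool) (c : Bool)
    (n : ℕ) : Prop :=
  ∃ v : ℕ → V, IsLooseCycleCopy k col c n v

lemma key_lemma (k m n N : ℕ) (hk : 2 ≤ k) (hm : 1 ≤ m) (hmn : m ≤ n)
    (hN : N < (k - 1) * n + (m + 1) / 2) :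
    ¬ HasLoosePath k
        (fun S : Finset (Fin N) => decide (∀ x ∈ S, (x : ℕ) < (k - 1) * n)) true n ∧
    ¬ HasLoosePath k
        (fun S : Finset (Fin N) => decide (∀ x ∈ S, (x : ℕ) < (k - 1) * n)) false m := by
  have hK : 1 ≤ k - 1 := by omega
  constructor
  · rintro ⟨v, hinj, hcol⟩
    simp only [decide_eq_true_eq] at hcol
    have hva : ∀ j ≤ n * (k - 1), (v j : ℕ) < (k - 1) * n := by
      intro j hj
      obtain ⟨i, hi, hji⟩ : ∃ i < n, j ∈ looseEdgeIdx k i := by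
        by_cases h : j < n * (k - 1)
        · refine ⟨j / (k - 1), Nat.div_lt_of_lt_mul (by rwa [mul_comm] at h), ?_⟩
          simp only [looseEdgeIdx, Finset.mem_Icc]
          have h1 := Nat.div_add_mod j (k - 1)
          have h2 := Nat.mod_lt j (show 0 < k - 1 by omega)
          have h3 : j / (k - 1) * (k - 1) = (k - 1) * (j / (k - 1)) := mul_comm _ _
          omega
        · refine ⟨n - 1, by omega, ?_⟩
          simp only [looseEdgeIdx, Finset.mem_Icc]
          have h4 : (n - 1 + 1) * (k - 1) = (n - 1) * (k - 1) + (k - 1) :=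
            Nat.succ_mul _ _
          have h5 : n - 1 + 1 = n := by omega
          rw [h5] at h4
          omega
      exact hcol i hi (v j) (Finset.mem_image_of_mem v hji)
    have hcard := Finset.card_le_card_of_injOn (fun j => (v j : ℕ))
      (s := Finset.range (n * (k - 1) + 1)) (t := Finset.range ((k - 1) * n))
      (fun j hj => by
        simp only [Finset.mem_coe, Finset.mem_range] at hj ⊢
        exact hva j (by omega))
      (fun j hj j' hj' hvv => by
        simp only [Finset.coe_range, Set.mem_Iio] at hj hj'
        exact hinj (Set.mem_Iio.mpr hj) (Set.mem_Iio.mpr hj') (Fin.val_injective hvv))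
    simp only [Finset.card_range] at hcard
    have : n * (k - 1) = (k - 1) * n := mul_comm _ _
    omega
  · rintro ⟨v, hinj, hcol⟩
    have H : ∀ i, i < (m + 1) / 2 →
        ∃ j, j ∈ looseEdgeIdx k (2 * i) ∧ (k - 1) * n ≤ (v j : ℕ) := by
      intro i hi
      have h2i : 2 * i < m := by omega
      have hc := hcol (2 * i) h2i
      simp only [decide_eq_false_iff_not] at hc
      push_neg at hc
      obtain ⟨x, hx, hax⟩ := hc
      obtain ⟨j, hj, rfl⟩ := Finset.mem_image.mp hx
      exact ⟨j, hj, hax⟩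
    let g : ℕ → ℕ := fun i => if h : i < (m + 1) / 2 then (H i h).choose else 0
    have hg : ∀ i (h : i < (m + 1) / 2),
        g i ∈ looseEdgeIdx k (2 * i) ∧ (k - 1) * n ≤ (v (g i) : ℕ) := by
      intro i h
      simp only [g, dif_pos h]
      exact (H i h).choose_spec
    have hgb : ∀ i, i < (m + 1) / 2 → g i ≤ m * (k - 1) := by
      intro i h
      have h1 := (hg i h).1
      simp only [looseEdgeIdx, Finset.mem_Icc] at h1
      have h2 : (2 * i + 1) * (k - 1) ≤ m * (k - 1) :=
        mul_le_mul_left (by omega) _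
      have h3 : (2 * i + 1) * (k - 1) = 2 * i * (k - 1) + (k - 1) := Nat.succ_mul _ _
      omega
    have hcard := Finset.card_le_card_of_injOn (fun i => (v (g i) : ℕ) - (k - 1) * n)
      (s := Finset.range ((m + 1) / 2)) (t := Finset.range (N - (k - 1) * n))
      (fun i hi => by
        simp only [Finset.mem_coe, Finset.mem_range] at hi ⊢
        have h1 := (hg i hi).2
        have h2 := (v (g i)).isLt
        omega)
      (fun i hi i' hi' hvv => by
        simp only [Finset.coe_range, Set.mem_Iio] at hi hi'
        have h1 := (hg i hi).2
        have h1' := (hg i' hi').2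
        simp only at hvv
        have heq : (v (g i) : ℕ) = (v (g i') : ℕ) := by omega
        have hgeq : g i = g i' := by
          apply hinj (Set.mem_Iio.mpr (by have := hgb i hi; omega))
            (Set.mem_Iio.mpr (by have := hgb i' hi'; omega))
          exact Fin.val_injective heq
        have hm1 := (hg i hi).1
        have hm2 := (hg i' hi').1
        simp only [looseEdgeIdx, Finset.mem_Icc] at hm1 hm2
        rcases Nat.lt_trichotomy i i' with h | h | h
        · have ha : (2 * i + 2) * (k - 1) ≤ 2 * i' * (k - 1) :=
            mul_le_mul_left (by omega) _
          have hb : (2 * i + 2) * (k - 1) = 2 * i * (k - 1) + 2 * (k - 1) :=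
            add_mul _ _ _
          omega
        · exact h
        · have ha : (2 * i' + 2) * (k - 1) ≤ 2 * i * (k - 1) :=
            mul_le_mul_left (by omega) _
          have hb : (2 * i' + 2) * (k - 1) = 2 * i' * (k - 1) + 2 * (k - 1) :=
            add_mul _ _ _
          omega)
    simp only [Finset.card_range] at hcard
    omega

/-- For `k ≥ 2` and `n ≥ m ≥ 1`,
`R(P^k_n, P^k_m) ≥ (k−1)n + ⌊(m+1)/2⌋`.  Concretely, on a vertex set of size
`(k−1)n + ⌊(m+1)/2⌋ − 1` the coloring which colors a `k`-set red (`true`) iff it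
is contained in the first `(k−1)n` vertices (i.e. blue iff it meets the set `B`
of the last `⌊(m+1)/2⌋ − 1` vertices) has no red copy of `P^k_n` and no blue copy
of `P^k_m`; and consequently every `N` for which all colorings contain a red
`P^k_n` or a blue `P^k_m` satisfies `N ≥ (k−1)n + ⌊(m+1)/2⌋`. -/
theorem loose_path_ramsey_lower_bound (k m n : ℕ) (hk : 2 ≤ k) (hm : 1 ≤ m)
    (hmn : m ≤ n) :
    (¬ HasLoosePath k
        (fun S : Finset (Fin ((k - 1) * n + (m + 1) / 2 - 1)) =>
          decide (∀ x ∈ S, (x : ℕ) < (k - 1) * n)) true n ∧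
      ¬ HasLoosePath k
        (fun S : Finset (Fin ((k - 1) * n + (m + 1) / 2 - 1)) =>
          decide (∀ x ∈ S, (x : ℕ) < (k - 1) * n)) false m) ∧
    ∀ N : ℕ, (∀ col : Finset (Fin N) → Bool,
        HasLoosePath k col true n ∨ HasLoosePath k col false m) →
      (k - 1) * n + (m + 1) / 2 ≤ N := by
  constructor
  · exact key_lemma k m n _ hk hm hmn (by omega)
  · intro N hcolall
    by_contra hlt
    push_neg at hlt
    obtain ⟨h1, h2⟩ := key_lemma k m n N hk hm hmn hlt
    rcases hcolall _ with h | h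
    · exact h1 h
    · exact h2 h
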